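/- If (b_k) and (c_k) are sequences of complex numbers with lim_{k→∞} (|b_k|·k!)^{1/k} = 0 and lim_{k→∞} (|c_k|·k!)^{1/k} = 0, then their Cauchy product d_n = Σ_{k=0}^n b_k · c_{n-k} satisfies lim_{n→∞} (|d_n|·n!)^{1/n} = 0. -/

import Mathlib

open Filter

private lemma geom_bound_of_tendsto (f : ℕ → ℝ) (hf : ∀ k, 0 ≤ f k)
    (h : Tendsto (fun k : ℕ => f k ^ (1 / (k : ℝ))) atTop (nhds 0))
    {ε : ℝ} (hε : 0 < ε) : ∃ C : ℝ, 1 ≤ C ∧ ∀ k, f k ≤ C * ε ^ k := by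
  obtain ⟨N, hN⟩ := Metric.tendsto_atTop.mp h ε hε
  refine ⟨1 + ∑ j ∈ Finset.range (N + 1), f j / ε ^ j, le_add_of_nonneg_right
    (Finset.sum_nonneg fun j _ => div_nonneg (hf j) (pow_nonneg hε.le j)), fun k => ?_⟩
  set C := 1 + ∑ j ∈ Finset.range (N + 1), f j / ε ^ j with hC
  by_cases hk : k ≤ N
  · have h1 : f k / ε ^ k ≤ ∑ j ∈ Finset.range (N + 1), f j / ε ^ j :=
      Finset.single_le_sum (f := fun j => f j / ε ^ j)
        (fun j _ => div_nonneg (hf j) (pow_nonneg hε.le j))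
        (Finset.mem_range.mpr (Nat.lt_succ_of_le hk))
    have h2 : f k / ε ^ k ≤ C := by rw [hC]; linarith
    calc f k = (f k / ε ^ k) * ε ^ k := by field_simp
    _ ≤ C * ε ^ k := mul_le_mul_of_nonneg_right h2 (pow_nonneg hε.le k)
  · push_neg at hk
    have hk1 : 1 ≤ k := Nat.one_le_iff_ne_zero.mpr (by omega)
    have hlt : f k ^ (1 / (k : ℝ)) < ε := by
      have := hN k (by omega)
      rwa [Real.dist_eq, sub_zero, abs_of_nonneg (Real.rpow_nonneg (hf k) _)] at this
    have hkne : (k : ℝ) ≠ 0 := Nat.cast_ne_zero.mpr (by omega)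
    have heq : (f k ^ (1 / (k : ℝ))) ^ k = f k := by
      rw [← Real.rpow_natCast (f k ^ (1 / (k : ℝ))) k, ← Real.rpow_mul (hf k),
        one_div_mul_cancel hkne, Real.rpow_one]
    have : f k < ε ^ k := by
      rw [← heq]
      exact pow_lt_pow_left₀ hlt (Real.rpow_nonneg (hf k) _) (by omega)
    calc f k ≤ ε ^ k := this.le
    _ ≤ C * ε ^ k := le_mul_of_one_le_left (pow_nonneg hε.le k) (by
      rw [hC]
      exact le_add_of_nonneg_right (Finset.sum_nonneg fun j _ =>
        div_nonneg (hf j) (pow_nonneg hε.le j)))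

theorem cauchy_product_of_local_operators (b c : ℕ → ℂ)
    (hb : Tendsto (fun k : ℕ => (‖b k‖ * k.factorial) ^ (1 / (k : ℝ)))
      atTop (nhds 0))
    (hc : Tendsto (fun k : ℕ => (‖c k‖ * k.factorial) ^ (1 / (k : ℝ)))
      atTop (nhds 0)) :
    Tendsto (fun n : ℕ =>
        (‖∑ k ∈ Finset.range (n + 1), b k * c (n - k)‖ * n.factorial)
          ^ (1 / (n : ℝ)))
      atTop (nhds 0) := by
  rw [Metric.tendsto_atTop]
  intro ε hε
  set δ : ℝ := ε / 4 with hδ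
  have hδ0 : 0 < δ := by positivity
  obtain ⟨Cb, hCb1, hCb⟩ := geom_bound_of_tendsto (fun k => ‖b k‖ * k.factorial)
    (fun k => by positivity) hb hδ0
  obtain ⟨Cc, hCc1, hCc⟩ := geom_bound_of_tendsto (fun k => ‖c k‖ * k.factorial)
    (fun k => by positivity) hc hδ0
  set C : ℝ := Cb * Cc with hCdef
  have hC1 : 1 ≤ C := one_le_mul_of_one_le_of_one_le hCb1 hCc1
  have hC0 : 0 < C := lt_of_lt_of_le one_pos hC1
  -- key bound
  have key : ∀ n : ℕ, ‖∑ k ∈ Finset.range (n + 1), b k * c (n - k)‖ * n.factorial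
      ≤ C * (2 * δ) ^ n := by
    intro n
    have h1 : ‖∑ k ∈ Finset.range (n + 1), b k * c (n - k)‖
        ≤ ∑ k ∈ Finset.range (n + 1), ‖b k‖ * ‖c (n - k)‖ := by
      refine (norm_sum_le _ _).trans_eq ?_
      exact Finset.sum_congr rfl fun k _ => norm_mul _ _
    have h2 : ∀ k ∈ Finset.range (n + 1),
        ‖b k‖ * ‖c (n - k)‖ * n.factorial
          ≤ C * δ ^ n * n.choose k := by
      intro k hk
      have hkn : k ≤ n := Nat.lt_succ_iff.mp (Finset.mem_range.mp hk)
      have hb' : ‖b k‖ * k.factorial ≤ Cb * δ ^ k := hCb k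
      have hc' : ‖c (n - k)‖ * (n - k).factorial ≤ Cc * δ ^ (n - k) := hCc (n - k)
      have hmul : (‖b k‖ * k.factorial) * (‖c (n - k)‖ * (n - k).factorial)
          ≤ (Cb * δ ^ k) * (Cc * δ ^ (n - k)) :=
        mul_le_mul hb' hc' (by positivity) (by positivity)
      have hfac : (n.choose k : ℝ) * (k.factorial * (n - k).factorial) = n.factorial := by
        rw [← Nat.choose_mul_factorial_mul_factorial hkn]; push_cast; ring
      have hδn : (Cb * δ ^ k) * (Cc * δ ^ (n - k)) = C * δ ^ n := by
        have hp : δ ^ k * δ ^ (n - k) = δ ^ n := by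
          rw [← pow_add, Nat.add_sub_cancel' hkn]
        rw [hCdef, ← hp]; ring
      calc ‖b k‖ * ‖c (n - k)‖ * n.factorial
          = ((‖b k‖ * k.factorial) * (‖c (n - k)‖ * (n - k).factorial))
            * n.choose k := by rw [← hfac]; ring
        _ ≤ ((Cb * δ ^ k) * (Cc * δ ^ (n - k))) * n.choose k :=
            mul_le_mul_of_nonneg_right hmul (Nat.cast_nonneg _)
        _ = C * δ ^ n * n.choose k := by rw [hδn]
    calc ‖∑ k ∈ Finset.range (n + 1), b k * c (n - k)‖ * n.factorial
        ≤ (∑ k ∈ Finset.range (n + 1), ‖b k‖ * ‖c (n - k)‖)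
          * n.factorial := mul_le_mul_of_nonneg_right h1 (Nat.cast_nonneg _)
      _ = ∑ k ∈ Finset.range (n + 1),
          ‖b k‖ * ‖c (n - k)‖ * n.factorial := by
          rw [Finset.sum_mul]
      _ ≤ ∑ k ∈ Finset.range (n + 1), C * δ ^ n * n.choose k := Finset.sum_le_sum h2
      _ = C * δ ^ n * ∑ k ∈ Finset.range (n + 1), (n.choose k : ℝ) := by
          rw [Finset.mul_sum]
      _ = C * δ ^ n * 2 ^ n := by
          norm_cast
          rw [Nat.sum_range_choose]
      _ = C * (2 * δ) ^ n := by rw [mul_pow]; ring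
  -- choose N with C < 2 ^ N
  obtain ⟨N, hN⟩ := pow_unbounded_of_one_lt C (one_lt_two (α := ℝ))
  refine ⟨max N 1, fun n hn => ?_⟩
  have hn1 : 1 ≤ n := le_trans (le_max_right N 1) hn
  have hnN : N ≤ n := le_trans (le_max_left N 1) hn
  have hnne : (n : ℝ) ≠ 0 := Nat.cast_ne_zero.mpr (by omega)
  have hinv : 0 < 1 / (n : ℝ) := by positivity
  have hCn : C < 2 ^ n := lt_of_lt_of_le hN (pow_le_pow_right₀ one_le_two hnN)
  have habs0 : (0:ℝ) ≤ ‖∑ k ∈ Finset.range (n + 1), b k * c (n - k)‖ * n.factorial :=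
    by positivity
  have hpow_eq : ∀ x : ℝ, 0 ≤ x → ((x ^ n : ℝ)) ^ (1 / (n : ℝ)) = x := by
    intro x hx
    rw [← Real.rpow_natCast x n, ← Real.rpow_mul hx, mul_one_div_cancel hnne, Real.rpow_one]
  have step1 : (‖∑ k ∈ Finset.range (n + 1), b k * c (n - k)‖ * n.factorial)
      ^ (1 / (n : ℝ)) ≤ (C * (2 * δ) ^ n) ^ (1 / (n : ℝ)) :=
    Real.rpow_le_rpow habs0 (key n) hinv.le
  have step2 : (C * (2 * δ) ^ n) ^ (1 / (n : ℝ)) = C ^ (1 / (n : ℝ)) * (2 * δ) := by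
    rw [Real.mul_rpow hC0.le (by positivity), hpow_eq (2 * δ) (by positivity)]
  have step3 : C ^ (1 / (n : ℝ)) < 2 := by
    have := Real.rpow_lt_rpow hC0.le hCn hinv
    rwa [hpow_eq 2 (by norm_num)] at this
  have hfinal : (‖∑ k ∈ Finset.range (n + 1), b k * c (n - k)‖ * n.factorial)
      ^ (1 / (n : ℝ)) < ε := by
    calc (‖∑ k ∈ Finset.range (n + 1), b k * c (n - k)‖ * n.factorial)
        ^ (1 / (n : ℝ)) ≤ C ^ (1 / (n : ℝ)) * (2 * δ) := step1.trans_eq step2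
      _ < 2 * (2 * δ) := mul_lt_mul_of_pos_right step3 (by positivity)
      _ = ε := by rw [hδ]; ring
  rw [Real.dist_eq, sub_zero, abs_of_nonneg (Real.rpow_nonneg habs0 _)]
  exact hfinal
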